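/- Let K[u,v] be graded by ℤ/cℤ with deg u = ā, deg v = b̄. If ξ₁ is an elementary graded automorphism and ξ₂ is a linear graded automorphism, then ξ₂∘ξ₁ = ζ₂∘ζ₁∘ζ₀ where ζ₀, ζ₂ are linear graded automorphisms, ζ₁ is an elementary graded automorphism, and ζ₂(u) = λu for some λ ≠ 0. -/

import Mathlib

open MvPolynomial

variable {K : Type*}

/-- Homogeneity for the `ℤ/cℤ`-grading of `K[u,v]` with `deg u = ā, deg v = b̄`. -/
def IsModHom [CommRing K] (a b c : ℕ) (p : MvPolynomial (Fin 2) K) (d : ZMod c) : Prop :=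
  ∀ m ∈ p.support, (m 0 : ZMod c) * (a : ZMod c) + (m 1 : ZMod c) * (b : ZMod c) = d

/-- Graded automorphism of `K[u,v]` for this grading. -/
def IsModGraded [CommRing K] (a b c : ℕ)
    (φ : MvPolynomial (Fin 2) K ≃ₐ[K] MvPolynomial (Fin 2) K) : Prop :=
  ∀ (d : ZMod c) (p : MvPolynomial (Fin 2) K), IsModHom a b c p d → IsModHom a b c (φ p) d

/-- Linear automorphisms: both images of the variables are (standard) homogeneous linear. -/
def IsLinearAut [CommRing K]
    (φ : MvPolynomial (Fin 2) K ≃ₐ[K] MvPolynomial (Fin 2) K) : Prop :=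
  (φ (X 0)).IsHomogeneous 1 ∧ (φ (X 1)).IsHomogeneous 1

/-- Elementary automorphisms of `K[u,v]`. -/
def IsElementary [CommRing K]
    (φ : MvPolynomial (Fin 2) K ≃ₐ[K] MvPolynomial (Fin 2) K) : Prop :=
  (∃ (l : K) (_ : l ≠ 0) (F : Polynomial K),
      φ (X 0) = X 0 ∧ φ (X 1) = C l * X 1 + Polynomial.aeval (X 0) F) ∨
  (∃ (l : K) (_ : l ≠ 0) (F : Polynomial K),
      φ (X 1) = X 1 ∧ φ (X 0) = C l * X 0 + Polynomial.aeval (X 1) F)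

section AuxIsModHom

variable [Field K] {a b c : ℕ}

lemma IsModHom.of_eq {p : MvPolynomial (Fin 2) K} {d d' : ZMod c}
    (h : IsModHom a b c p d) (hd : d = d') : IsModHom a b c p d' := hd ▸ h

lemma isModHom_zero {d : ZMod c} : IsModHom a b c (0 : MvPolynomial (Fin 2) K) d := by
  intro m hm; simp at hm

lemma IsModHom.add' {p q : MvPolynomial (Fin 2) K} {d : ZMod c}
    (hp : IsModHom a b c p d) (hq : IsModHom a b c q d) : IsModHom a b c (p + q) d := by
  intro m hm
  rcases Finset.mem_union.1 (MvPolynomial.support_add hm) with h | h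
  · exact hp m h
  · exact hq m h

lemma IsModHom.sub' {p q : MvPolynomial (Fin 2) K} {d : ZMod c}
    (hp : IsModHom a b c p d) (hq : IsModHom a b c q d) : IsModHom a b c (p - q) d := by
  classical
  intro m hm
  rcases Finset.mem_union.1 (support_sub _ p q hm) with h | h
  · exact hp m h
  · exact hq m h

lemma isModHom_sum {s : Finset (Fin 2 →₀ ℕ)} {f : (Fin 2 →₀ ℕ) → MvPolynomial (Fin 2) K}
    {d : ZMod c} (h : ∀ i ∈ s, IsModHom a b c (f i) d) :
    IsModHom a b c (∑ i ∈ s, f i) d := by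
  classical
  induction s using Finset.induction with
  | empty => simpa using (isModHom_zero (a := a) (b := b))
  | insert _ _ hx ih =>
    rw [Finset.sum_insert hx]
    exact (h _ (Finset.mem_insert_self _ _)).add'
      (ih fun i hi => h i (Finset.mem_insert_of_mem hi))

lemma IsModHom.mul' {p q : MvPolynomial (Fin 2) K} {d e : ZMod c}
    (hp : IsModHom a b c p d) (hq : IsModHom a b c q e) : IsModHom a b c (p * q) (d + e) := by
  classical
  intro m hm
  obtain ⟨m1, hm1, m2, hm2, rfl⟩ := Finset.mem_add.1 (support_mul p q hm)
  have e1 := hp m1 hm1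
  have e2 := hq m2 hm2
  have : ((m1 + m2) 0 : ZMod c) * a + ((m1 + m2) 1) * b
      = ((m1 0 : ZMod c) * a + m1 1 * b) + ((m2 0 : ZMod c) * a + m2 1 * b) := by
    simp [Finsupp.add_apply]; ring
  rw [this, e1, e2]

lemma isModHom_C (r : K) : IsModHom a b c (C r : MvPolynomial (Fin 2) K) 0 := by
  classical
  intro m hm
  rw [C_apply] at hm
  have h2 := support_monomial_subset hm
  rw [Finset.mem_singleton] at h2
  subst h2; simp

lemma IsModHom.pow' {p : MvPolynomial (Fin 2) K} {d : ZMod c}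
    (hp : IsModHom a b c p d) (n : ℕ) : IsModHom a b c (p ^ n) ((n : ZMod c) * d) := by
  induction n with
  | zero =>
    simpa using (isModHom_C (a := a) (b := b) (c := c) (1 : K))
  | succ n ih =>
    have h2 := ih.mul' hp
    rw [← pow_succ] at h2
    exact h2.of_eq (by push_cast; ring)

lemma isModHom_X0 : IsModHom a b c (X 0 : MvPolynomial (Fin 2) K) a := by
  intro m hm
  rw [support_X, Finset.mem_singleton] at hm
  subst hm
  simp [Finsupp.single_eq_of_ne]

lemma isModHom_X1 : IsModHom a b c (X 1 : MvPolynomial (Fin 2) K) b := by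
  intro m hm
  rw [support_X, Finset.mem_singleton] at hm
  subst hm
  simp [Finsupp.single_eq_of_ne]

lemma isModHom_lin {α β : K} {d : ZMod c} (h0 : α ≠ 0 → (a : ZMod c) = d)
    (h1 : β ≠ 0 → (b : ZMod c) = d) :
    IsModHom a b c (C α * X 0 + C β * X 1 : MvPolynomial (Fin 2) K) d := by
  apply IsModHom.add'
  · by_cases hα : α = 0
    · subst hα; simpa using (isModHom_zero (a := a) (b := b))
    · exact ((isModHom_C α).mul' isModHom_X0).of_eq (by rw [zero_add, h0 hα])
  · by_cases hβ : β = 0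
    · subst hβ; simpa using (isModHom_zero (a := a) (b := b))
    · exact ((isModHom_C β).mul' isModHom_X1).of_eq (by rw [zero_add, h1 hβ])

lemma monomial_eq_two (m : Fin 2 →₀ ℕ) (r : K) :
    (monomial m r : MvPolynomial (Fin 2) K) = C r * X 0 ^ (m 0) * X 1 ^ (m 1) := by
  rw [monomial_eq, Finsupp.prod_fintype _ _ (fun i => pow_zero _), Fin.prod_univ_two, mul_assoc]

lemma isModGraded_of (φ : MvPolynomial (Fin 2) K ≃ₐ[K] MvPolynomial (Fin 2) K)
    (h0 : IsModHom a b c (φ (X 0)) a) (h1 : IsModHom a b c (φ (X 1)) b) :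
    IsModGraded a b c φ := by
  intro d p hp
  rw [← support_sum_monomial_coeff p, map_sum]
  apply isModHom_sum
  intro m hm
  rw [monomial_eq_two, map_mul, map_mul, map_pow, map_pow, ← MvPolynomial.algebraMap_eq,
    AlgEquiv.commutes, MvPolynomial.algebraMap_eq]
  exact (((isModHom_C _).mul' (h0.pow' _)).mul' (h1.pow' _)).of_eq
    (by rw [zero_add, ← hp m hm])

lemma aeval_X1_eq_rename (F : Polynomial K) :
    (Polynomial.aeval (X 1) F : MvPolynomial (Fin 2) K)
      = rename (Equiv.swap (0 : Fin 2) 1) (Polynomial.aeval (X 0) F) := by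
  rw [← Polynomial.aeval_algHom_apply]
  simp

lemma aeval_X0_eq_rename (F : Polynomial K) :
    (Polynomial.aeval (X 0) F : MvPolynomial (Fin 2) K)
      = rename (Equiv.swap (0 : Fin 2) 1) (Polynomial.aeval (X 1) F) := by
  rw [← Polynomial.aeval_algHom_apply]
  simp

lemma isModHom_rename_swap (hab : (a : ZMod c) = b) {p : MvPolynomial (Fin 2) K} {d : ZMod c}
    (h : IsModHom a b c p d) :
    IsModHom a b c (rename (Equiv.swap (0 : Fin 2) 1) p) d := by
  classical
  intro m hm
  rw [support_rename_of_injective (Equiv.injective _)] at hm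
  obtain ⟨m₀, hm₀, rfl⟩ := Finset.mem_image.1 hm
  have h0 : Finsupp.mapDomain (⇑(Equiv.swap (0:Fin 2) 1)) m₀ 0 = m₀ 1 := by
    have := Finsupp.mapDomain_apply (Equiv.injective (Equiv.swap (0:Fin 2) 1)) m₀ 1
    simpa using this
  have h1 : Finsupp.mapDomain (⇑(Equiv.swap (0:Fin 2) 1)) m₀ 1 = m₀ 0 := by
    have := Finsupp.mapDomain_apply (Equiv.injective (Equiv.swap (0:Fin 2) 1)) m₀ 0
    simpa using this
  rw [h0, h1, ← h m₀ hm₀, ← hab]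
  ring

end AuxIsModHom

section AuxEquiv

variable [Field K]

/-- A pair of polynomials as a function on `Fin 2`. -/
noncomputable def pr (p0 p1 : MvPolynomial (Fin 2) K) : Fin 2 → MvPolynomial (Fin 2) K :=
  fun i => if i = 0 then p0 else p1

@[simp] lemma pr_0 (p0 p1 : MvPolynomial (Fin 2) K) : pr p0 p1 0 = p0 := rfl
@[simp] lemma pr_1 (p0 p1 : MvPolynomial (Fin 2) K) : pr p0 p1 1 = p1 := rfl

lemma comp2_ext {f g : MvPolynomial (Fin 2) K →ₐ[K] MvPolynomial (Fin 2) K}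
    (h0 : f (X 0) = g (X 0)) (h1 : f (X 1) = g (X 1)) : f = g :=
  algHom_ext fun i => by fin_cases i; exacts [h0, h1]

noncomputable def mk2 (p0 p1 q0 q1 : MvPolynomial (Fin 2) K)
    (h1 : aeval (pr p0 p1) q0 = X 0) (h2 : aeval (pr p0 p1) q1 = X 1)
    (h3 : aeval (pr q0 q1) p0 = X 0) (h4 : aeval (pr q0 q1) p1 = X 1) :
    MvPolynomial (Fin 2) K ≃ₐ[K] MvPolynomial (Fin 2) K :=
  AlgEquiv.ofAlgHom (aeval (pr p0 p1)) (aeval (pr q0 q1))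
    (comp2_ext (by simpa using h1) (by simpa using h2))
    (comp2_ext (by simpa using h3) (by simpa using h4))

@[simp] lemma mk2_X0 (p0 p1 q0 q1 : MvPolynomial (Fin 2) K) (h1 h2 h3 h4) :
    mk2 p0 p1 q0 q1 h1 h2 h3 h4 (X 0) = p0 := by
  simp [mk2, AlgEquiv.ofAlgHom]

@[simp] lemma mk2_X1 (p0 p1 q0 q1 : MvPolynomial (Fin 2) K) (h1 h2 h3 h4) :
    mk2 p0 p1 q0 q1 h1 h2 h3 h4 (X 1) = p1 := by
  simp [mk2, AlgEquiv.ofAlgHom]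

lemma lin_cond0 (s t α β γ δ : K) (h1 : s*α + t*γ = 1) (h2 : s*β + t*δ = 0) :
    aeval (pr (C α * X 0 + C β * X 1) (C γ * X 0 + C δ * X 1))
      (C s * X 0 + C t * X 1 : MvPolynomial (Fin 2) K) = X 0 := by
  simp only [map_add, map_mul, aeval_C, aeval_X, pr_0, pr_1, MvPolynomial.algebraMap_eq]
  have hA : (C s * C α + C t * C γ : MvPolynomial (Fin 2) K) = 1 := by
    rw [← map_mul, ← map_mul, ← map_add, h1, map_one]
  have hB : (C s * C β + C t * C δ : MvPolynomial (Fin 2) K) = 0 := by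
    rw [← map_mul, ← map_mul, ← map_add, h2, map_zero]
  have expand : (C s * (C α * X 0 + C β * X 1) + C t * (C γ * X 0 + C δ * X 1)
      : MvPolynomial (Fin 2) K)
      = (C s * C α + C t * C γ) * X 0 + (C s * C β + C t * C δ) * X 1 := by ring
  rw [expand, hA, hB, one_mul, zero_mul, add_zero]

lemma lin_cond1 (s t α β γ δ : K) (h1 : s*α + t*γ = 0) (h2 : s*β + t*δ = 1) :
    aeval (pr (C α * X 0 + C β * X 1) (C γ * X 0 + C δ * X 1))
      (C s * X 0 + C t * X 1 : MvPolynomial (Fin 2) K) = X 1 := by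
  simp only [map_add, map_mul, aeval_C, aeval_X, pr_0, pr_1, MvPolynomial.algebraMap_eq]
  have hA : (C s * C α + C t * C γ : MvPolynomial (Fin 2) K) = 0 := by
    rw [← map_mul, ← map_mul, ← map_add, h1, map_zero]
  have hB : (C s * C β + C t * C δ : MvPolynomial (Fin 2) K) = 1 := by
    rw [← map_mul, ← map_mul, ← map_add, h2, map_one]
  have expand : (C s * (C α * X 0 + C β * X 1) + C t * (C γ * X 0 + C δ * X 1)
      : MvPolynomial (Fin 2) K)
      = (C s * C α + C t * C γ) * X 0 + (C s * C β + C t * C δ) * X 1 := by ring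
  rw [expand, hA, hB, one_mul, zero_mul, zero_add]

noncomputable def lin2 (α β γ δ : K) (h : α*δ - β*γ ≠ 0) :
    MvPolynomial (Fin 2) K ≃ₐ[K] MvPolynomial (Fin 2) K :=
  mk2 (C α * X 0 + C β * X 1) (C γ * X 0 + C δ * X 1)
    (C (δ/(α*δ-β*γ)) * X 0 + C (-β/(α*δ-β*γ)) * X 1)
    (C (-γ/(α*δ-β*γ)) * X 0 + C (α/(α*δ-β*γ)) * X 1)
    (lin_cond0 _ _ _ _ _ _ (by linear_combination mul_inv_cancel₀ h) (by field_simp; try ring))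
    (lin_cond1 _ _ _ _ _ _ (by field_simp; try ring) (by linear_combination mul_inv_cancel₀ h))
    (lin_cond0 _ _ _ _ _ _ (by field_simp; try ring) (by field_simp; try ring))
    (lin_cond1 _ _ _ _ _ _ (by field_simp; try ring) (by linear_combination mul_inv_cancel₀ h))

@[simp] lemma lin2_X0 (α β γ δ : K) (h) :
    lin2 α β γ δ h (X 0) = C α * X 0 + C β * X 1 := mk2_X0 ..

@[simp] lemma lin2_X1 (α β γ δ : K) (h) :
    lin2 α β γ δ h (X 1) = C γ * X 0 + C δ * X 1 := mk2_X1 ..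

lemma aeval_pair_polyaeval (g : Fin 2 → MvPolynomial (Fin 2) K) (F : Polynomial K) (i : Fin 2) :
    aeval g (Polynomial.aeval (X i) F : MvPolynomial (Fin 2) K) = Polynomial.aeval (g i) F := by
  rw [← Polynomial.aeval_algHom_apply]
  simp

noncomputable def elemU (l : K) (hl : l ≠ 0) (F : Polynomial K) :
    MvPolynomial (Fin 2) K ≃ₐ[K] MvPolynomial (Fin 2) K :=
  mk2 (C l * X 0 + Polynomial.aeval (X 1) F) (X 1)
    (C l⁻¹ * X 0 - C l⁻¹ * Polynomial.aeval (X 1) F) (X 1)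
    (by
      simp only [map_sub, map_mul, map_add, aeval_C, aeval_X, pr_0, pr_1,
        MvPolynomial.algebraMap_eq, aeval_pair_polyaeval]
      have hC : (C l⁻¹ : MvPolynomial (Fin 2) K) * C l = 1 := by
        rw [← map_mul, inv_mul_cancel₀ hl, map_one]
      linear_combination (X 0 : MvPolynomial (Fin 2) K) * hC)
    (by simp)
    (by
      simp only [map_sub, map_mul, map_add, aeval_C, aeval_X, pr_0, pr_1,
        MvPolynomial.algebraMap_eq, aeval_pair_polyaeval]
      have hC : (C l : MvPolynomial (Fin 2) K) * C l⁻¹ = 1 := by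
        rw [← map_mul, mul_inv_cancel₀ hl, map_one]
      linear_combination ((X 0 : MvPolynomial (Fin 2) K) - Polynomial.aeval (X 1) F) * hC)
    (by simp)

@[simp] lemma elemU_X0 (l : K) (hl) (F : Polynomial K) :
    elemU l hl F (X 0) = C l * X 0 + Polynomial.aeval (X 1) F := mk2_X0 ..

@[simp] lemma elemU_X1 (l : K) (hl) (F : Polynomial K) :
    elemU l hl F (X 1) = X 1 := mk2_X1 ..

noncomputable def elemV (l : K) (hl : l ≠ 0) (F : Polynomial K) :
    MvPolynomial (Fin 2) K ≃ₐ[K] MvPolynomial (Fin 2) K :=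
  mk2 (X 0) (C l * X 1 + Polynomial.aeval (X 0) F)
    (X 0) (C l⁻¹ * X 1 - C l⁻¹ * Polynomial.aeval (X 0) F)
    (by simp)
    (by
      simp only [map_sub, map_mul, map_add, aeval_C, aeval_X, pr_0, pr_1,
        MvPolynomial.algebraMap_eq, aeval_pair_polyaeval]
      have hC : (C l⁻¹ : MvPolynomial (Fin 2) K) * C l = 1 := by
        rw [← map_mul, inv_mul_cancel₀ hl, map_one]
      linear_combination (X 1 : MvPolynomial (Fin 2) K) * hC)
    (by simp)
    (by
      simp only [map_sub, map_mul, map_add, aeval_C, aeval_X, pr_0, pr_1,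
        MvPolynomial.algebraMap_eq, aeval_pair_polyaeval]
      have hC : (C l : MvPolynomial (Fin 2) K) * C l⁻¹ = 1 := by
        rw [← map_mul, mul_inv_cancel₀ hl, map_one]
      linear_combination ((X 1 : MvPolynomial (Fin 2) K) - Polynomial.aeval (X 0) F) * hC)

@[simp] lemma elemV_X0 (l : K) (hl) (F : Polynomial K) :
    elemV l hl F (X 0) = X 0 := mk2_X0 ..

@[simp] lemma elemV_X1 (l : K) (hl) (F : Polynomial K) :
    elemV l hl F (X 1) = C l * X 1 + Polynomial.aeval (X 0) F := mk2_X1 ..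

lemma equiv_ext {e1 e2 : MvPolynomial (Fin 2) K ≃ₐ[K] MvPolynomial (Fin 2) K}
    (h0 : e1 (X 0) = e2 (X 0)) (h1 : e1 (X 1) = e2 (X 1)) : e1 = e2 :=
  AlgEquiv.coe_algHom_injective (comp2_ext h0 h1)

@[simp] lemma aeq_C (e : MvPolynomial (Fin 2) K ≃ₐ[K] MvPolynomial (Fin 2) K) (r : K) :
    e (C r) = C r := by
  rw [← MvPolynomial.algebraMap_eq]
  exact e.commutes r

lemma coeff_lin_0 (s t : K) :
    coeff (Finsupp.single 0 1) (C s * X 0 + C t * X 1 : MvPolynomial (Fin 2) K) = s := by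
  classical
  rw [C_mul_X_eq_monomial, C_mul_X_eq_monomial, coeff_add, coeff_monomial, coeff_monomial,
    if_pos rfl, if_neg, add_zero]
  intro h
  have := DFunLike.congr_fun h (0 : Fin 2)
  simp [Finsupp.single_eq_of_ne] at this

lemma coeff_lin_1 (s t : K) :
    coeff (Finsupp.single 1 1) (C s * X 0 + C t * X 1 : MvPolynomial (Fin 2) K) = t := by
  classical
  rw [C_mul_X_eq_monomial, C_mul_X_eq_monomial, coeff_add, coeff_monomial, coeff_monomial,
    if_pos rfl, if_neg, zero_add]
  intro h
  have := DFunLike.congr_fun h (0 : Fin 2)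
  simp [Finsupp.single_eq_of_ne] at this

lemma hom1_rep {p : MvPolynomial (Fin 2) K} (hp : p.IsHomogeneous 1) :
    p = C (coeff (Finsupp.single 0 1) p) * X 0 + C (coeff (Finsupp.single 1 1) p) * X 1 := by
  classical
  apply MvPolynomial.ext
  intro m
  by_cases h0 : m = Finsupp.single 0 1
  · subst h0; rw [coeff_lin_0]
  by_cases h1 : m = Finsupp.single 1 1
  · subst h1; rw [coeff_lin_1]
  rw [C_mul_X_eq_monomial, C_mul_X_eq_monomial, coeff_add, coeff_monomial, coeff_monomial,
    if_neg (fun h => h0 h.symm), if_neg (fun h => h1 h.symm), add_zero]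
  by_contra hc
  have hdeg := hp hc
  rw [Finsupp.weight_apply, Finsupp.sum_fintype _ _ (fun i => by simp), Fin.sum_univ_two] at hdeg
  simp only [Pi.one_apply, smul_eq_mul, mul_one] at hdeg
  have hm0 : m 0 = 1 ∧ m 1 = 0 ∨ m 0 = 0 ∧ m 1 = 1 := by omega
  rcases hm0 with ⟨ha, hb⟩ | ⟨ha, hb⟩
  · exact h0 (Finsupp.ext fun i => by
      fin_cases i <;> simp [ha, hb, Finsupp.single_eq_of_ne])
  · exact h1 (Finsupp.ext fun i => by
      fin_cases i <;> simp [ha, hb, Finsupp.single_eq_of_ne])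

lemma isHomogeneous_lin (s t : K) :
    (C s * X 0 + C t * X 1 : MvPolynomial (Fin 2) K).IsHomogeneous 1 := by
  rw [C_mul_X_eq_monomial, C_mul_X_eq_monomial]
  exact (isHomogeneous_monomial _ (by
      simp [Finsupp.degree_single])).add
    (isHomogeneous_monomial _ (by
      simp [Finsupp.degree_single]))

lemma det_ne (e : MvPolynomial (Fin 2) K ≃ₐ[K] MvPolynomial (Fin 2) K) {α β γ δ : K}
    (hA : e (X 0) = C α * X 0 + C β * X 1) (hB : e (X 1) = C γ * X 0 + C δ * X 1) :
    α*δ - β*γ ≠ 0 := by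
  intro h
  have hC1 : (C δ * C α - C β * C γ : MvPolynomial (Fin 2) K) = 0 := by
    rw [← map_mul, ← map_mul, ← map_sub, show δ*α - β*γ = α*δ - β*γ from by ring, h, map_zero]
  have h1 : e (C δ * X 0 - C β * X 1) = 0 := by
    rw [map_sub, map_mul, map_mul, aeq_C, aeq_C, hA, hB]
    linear_combination (X 0 : MvPolynomial (Fin 2) K) * hC1
  have h2 : (C δ * X 0 - C β * X 1 : MvPolynomial (Fin 2) K) = 0 :=
    e.injective (by rw [h1, map_zero])
  have h2' : (C δ * X 0 + C (-β) * X 1 : MvPolynomial (Fin 2) K) = 0 := by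
    rw [map_neg, neg_mul, ← sub_eq_add_neg]; exact h2
  have hδ : δ = 0 := by
    have hc := congrArg (coeff (Finsupp.single 0 1)) h2'
    rw [coeff_lin_0] at hc; simpa using hc
  have hβ : β = 0 := by
    have hc := congrArg (coeff (Finsupp.single 1 1)) h2'
    rw [coeff_lin_1] at hc
    have h5 : -β = 0 := by simpa using hc
    exact neg_eq_zero.mp h5
  subst hδ; subst hβ
  have h3 : e (C γ * X 0 - C α * X 1) = 0 := by
    rw [map_sub, map_mul, map_mul, aeq_C, aeq_C, hA, hB]
    simp only [map_zero, zero_mul, add_zero]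
    ring
  have h4 : (C γ * X 0 + C (-α) * X 1 : MvPolynomial (Fin 2) K) = 0 := by
    rw [map_neg, neg_mul, ← sub_eq_add_neg]
    exact e.injective (by rw [h3, map_zero])
  have hγ : γ = 0 := by
    have hc := congrArg (coeff (Finsupp.single 0 1)) h4
    rw [coeff_lin_0] at hc; simpa using hc
  subst hγ
  have h6 : (X 1 : MvPolynomial (Fin 2) K) = 0 := by
    apply e.injective
    rw [hB, map_zero]
    simp
  exact X_ne_zero 1 h6

end AuxEquiv

section AuxPoly

variable [Field K]

lemma polyaeval_linear (x : MvPolynomial (Fin 2) K) (s : K) (F : Polynomial K) :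
    Polynomial.aeval x (Polynomial.C s * Polynomial.X + F) = C s * x + Polynomial.aeval x F := by
  simp [MvPolynomial.algebraMap_eq]

end AuxPoly

/-- if `ξ₁` is elementary graded and `ξ₂` is linear graded, then
`ξ₂∘ξ₁ = ζ₂∘ζ₁∘ζ₀` with `ζ₀, ζ₂` linear graded, `ζ₁` elementary graded and
`ζ₂(u) = λu`, `λ ≠ 0`. -/
theorem linear_after_elementary [Field K] [IsAlgClosed K] [CharZero K]
    (a b c : ℕ)
    (ξ₁ ξ₂ : MvPolynomial (Fin 2) K ≃ₐ[K] MvPolynomial (Fin 2) K)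
    (h1e : IsElementary ξ₁) (h1g : IsModGraded a b c ξ₁)
    (h2l : IsLinearAut ξ₂) (h2g : IsModGraded a b c ξ₂) :
    ∃ ζ₀ ζ₁ ζ₂ : MvPolynomial (Fin 2) K ≃ₐ[K] MvPolynomial (Fin 2) K,
      IsLinearAut ζ₀ ∧ IsModGraded a b c ζ₀ ∧
      IsElementary ζ₁ ∧ IsModGraded a b c ζ₁ ∧
      IsLinearAut ζ₂ ∧ IsModGraded a b c ζ₂ ∧
      ξ₂ * ξ₁ = ζ₂ * ζ₁ * ζ₀ ∧
      ∃ l : K, l ≠ 0 ∧ ζ₂ (X 0) = C l * X 0 := by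
  classical
  obtain ⟨hh0, hh1⟩ := h2l
  obtain ⟨α, β, hA⟩ : ∃ α β : K, ξ₂ (X 0) = C α * X 0 + C β * X 1 := ⟨_, _, hom1_rep hh0⟩
  obtain ⟨γ, δ, hB⟩ : ∃ γ δ : K, ξ₂ (X 1) = C γ * X 0 + C δ * X 1 := ⟨_, _, hom1_rep hh1⟩
  have hdet : α*δ - β*γ ≠ 0 := det_ne ξ₂ hA hB
  have hab_of_β : β ≠ 0 → (a : ZMod c) = (b : ZMod c) := by
    intro hβ
    have h1 := h2g (a : ZMod c) (X 0) isModHom_X0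
    rw [hA] at h1
    have hmem : Finsupp.single 1 1 ∈ (C α * X 0 + C β * X 1 : MvPolynomial (Fin 2) K).support := by
      rw [mem_support_iff, coeff_lin_1]; exact hβ
    have h3 := h1 _ hmem
    simp [Finsupp.single_apply] at h3
    exact h3.symm
  have hab_of_γ : γ ≠ 0 → (a : ZMod c) = (b : ZMod c) := by
    intro hγ
    have h1 := h2g (b : ZMod c) (X 1) isModHom_X1
    rw [hB] at h1
    have hmem : Finsupp.single 0 1 ∈ (C γ * X 0 + C δ * X 1 : MvPolynomial (Fin 2) K).support := by
      rw [mem_support_iff, coeff_lin_0]; exact hγ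
    have h3 := h1 _ hmem
    simpa [Finsupp.single_apply] using h3
  rcases h1e with ⟨l, hl, F, hX0, hX1⟩ | ⟨l, hl, F, hX1, hX0⟩
  · -- ξ₁ fixes u : u ↦ u, v ↦ l v + F(u)
    have hF : IsModHom a b c (Polynomial.aeval (X 0) F : MvPolynomial (Fin 2) K) (b : ZMod c) := by
      have h1 := h1g (b : ZMod c) (X 1) isModHom_X1
      rw [hX1] at h1
      have h2 := h1.sub' (((isModHom_C l).mul' isModHom_X1).of_eq (zero_add _))
      simpa using h2
    by_cases hβ : β = 0
    · -- trivial decomposition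
      have hα : α ≠ 0 := fun h0 => hdet (by rw [h0, hβ]; ring)
      refine ⟨1, ξ₁, ξ₂, ⟨?_, ?_⟩, ?_, Or.inl ⟨l, hl, F, hX0, hX1⟩, h1g, ⟨hh0, hh1⟩, h2g,
        (mul_one _).symm, α, hα, ?_⟩
      · rw [AlgEquiv.one_apply]; exact isHomogeneous_X _ _
      · rw [AlgEquiv.one_apply]; exact isHomogeneous_X _ _
      · intro d p hp; rw [AlgEquiv.one_apply]; exact hp
      · rw [hA, hβ, C_0, zero_mul, add_zero]
    · have hab := hab_of_β hβ
      have ht : (l*δ/β)*β = l*δ := div_mul_cancel₀ _ hβ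
      have hlamβ : (l*γ - l*δ/β*α)*β = -(l*(α*δ-β*γ)) := by linear_combination (-α) * ht
      have hlam : l*γ - l*δ/β*α ≠ 0 := by
        intro h0
        have h2 : l*(α*δ-β*γ) = 0 := by rw [← neg_eq_zero, ← hlamβ, h0, zero_mul]
        exact hdet ((mul_eq_zero.mp h2).resolve_left hl)
      refine ⟨lin2 0 1 1 (l*δ/β) (by norm_num),
        elemU 1 one_ne_zero F,
        lin2 (l*γ - l*δ/β*α) 0 α β (by simpa using mul_ne_zero hlam hβ),
        ⟨by rw [lin2_X0]; exact isHomogeneous_lin _ _,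
         by rw [lin2_X1]; exact isHomogeneous_lin _ _⟩,
        isModGraded_of _
          (by rw [lin2_X0]; exact isModHom_lin (fun h => absurd rfl h) (fun _ => hab.symm))
          (by rw [lin2_X1]; exact isModHom_lin (fun _ => hab) (fun _ => rfl)),
        Or.inr ⟨1, one_ne_zero, F, elemU_X1 1 one_ne_zero F, elemU_X0 1 one_ne_zero F⟩,
        isModGraded_of _
          (by
            rw [elemU_X0]
            refine IsModHom.add' (((isModHom_C 1).mul' isModHom_X0).of_eq (zero_add _)) ?_
            rw [aeval_X1_eq_rename]
            exact (isModHom_rename_swap hab hF).of_eq hab.symm)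
          (by rw [elemU_X1]; exact isModHom_X1),
        ⟨by rw [lin2_X0]; exact isHomogeneous_lin _ _,
         by rw [lin2_X1]; exact isHomogeneous_lin _ _⟩,
        isModGraded_of _
          (by rw [lin2_X0]; exact isModHom_lin (fun _ => rfl) (fun h => absurd rfl h))
          (by rw [lin2_X1]; exact isModHom_lin (fun _ => hab) (fun _ => rfl)),
        ?_, ⟨l*γ - l*δ/β*α, hlam, by rw [lin2_X0, C_0, zero_mul, add_zero]⟩⟩
      apply equiv_ext
      · simp only [AlgEquiv.mul_apply]
        rw [hX0, hA]
        simp only [lin2_X0, lin2_X1, elemU_X0, elemU_X1, map_add, map_mul, aeq_C,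
          ← Polynomial.aeval_algHom_apply, C_0, C_1, map_zero, map_one, zero_mul, mul_zero, one_mul, mul_one, add_zero, zero_add]
        try ring
      · simp only [AlgEquiv.mul_apply]
        rw [hX1]
        simp only [lin2_X0, lin2_X1, elemU_X0, elemU_X1, map_add, map_mul, aeq_C,
          ← Polynomial.aeval_algHom_apply, hA, hB, C_0, C_1, map_zero, map_one, zero_mul, mul_zero, one_mul, mul_one, add_zero, zero_add]
        have k1 : (C l * C γ : MvPolynomial (Fin 2) K)
            = C (l*γ - l*δ/β*α) + C (l*δ/β) * C α := by
          rw [← map_mul, ← map_mul, ← map_add]; exact congrArg C (by ring)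
        have k2 : (C l * C δ : MvPolynomial (Fin 2) K) = C (l*δ/β) * C β := by
          rw [← map_mul, ← map_mul]; exact congrArg C (by field_simp)
        linear_combination (X 0 : MvPolynomial (Fin 2) K) * k1
          + (X 1 : MvPolynomial (Fin 2) K) * k2
  · -- ξ₁ fixes v : v ↦ v, u ↦ l u + F(v)
    have hF : IsModHom a b c (Polynomial.aeval (X 1) F : MvPolynomial (Fin 2) K) (a : ZMod c) := by
      have h1 := h1g (a : ZMod c) (X 0) isModHom_X0
      rw [hX0] at h1
      have h2 := h1.sub' (((isModHom_C l).mul' isModHom_X0).of_eq (zero_add _))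
      simpa using h2
    by_cases hδ : δ = 0
    · subst hδ
      have hβ : β ≠ 0 := fun h0 => hdet (by rw [h0]; ring)
      have hγ : γ ≠ 0 := fun h0 => hdet (by rw [h0]; ring)
      have hab := hab_of_β hβ
      have hlβ : l*β ≠ 0 := mul_ne_zero hl hβ
      refine ⟨lin2 0 1 1 0 (by norm_num),
        elemV (l*β) hlβ (Polynomial.C (l*α/γ) * Polynomial.X + F),
        lin2 γ 0 0 1 (by simpa using hγ),
        ⟨by rw [lin2_X0]; exact isHomogeneous_lin _ _,
         by rw [lin2_X1]; exact isHomogeneous_lin _ _⟩,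
        isModGraded_of _
          (by rw [lin2_X0]; exact isModHom_lin (fun h => absurd rfl h) (fun _ => hab.symm))
          (by rw [lin2_X1]; exact isModHom_lin (fun _ => hab) (fun h => absurd rfl h)),
        Or.inl ⟨l*β, hlβ, Polynomial.C (l*α/γ) * Polynomial.X + F, elemV_X0 (l*β) hlβ _, elemV_X1 (l*β) hlβ _⟩,
        isModGraded_of _
          (by rw [elemV_X0]; exact isModHom_X0)
          (by
            rw [elemV_X1, polyaeval_linear]
            refine IsModHom.add' (((isModHom_C _).mul' isModHom_X1).of_eq (zero_add _)) ?_
            refine IsModHom.add' (((isModHom_C _).mul' isModHom_X0).of_eq ?_) ?_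
            · rw [zero_add]; exact hab
            · rw [aeval_X0_eq_rename]
              exact (isModHom_rename_swap hab hF).of_eq hab),
        ⟨by rw [lin2_X0]; exact isHomogeneous_lin _ _,
         by rw [lin2_X1]; exact isHomogeneous_lin _ _⟩,
        isModGraded_of _
          (by rw [lin2_X0]; exact isModHom_lin (fun _ => rfl) (fun h => absurd rfl h))
          (by rw [lin2_X1]; exact isModHom_lin (fun h => absurd rfl h) (fun _ => rfl)),
        ?_, ⟨γ, hγ, by rw [lin2_X0, C_0, zero_mul, add_zero]⟩⟩
      apply equiv_ext
      · simp only [AlgEquiv.mul_apply]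
        rw [hX0]
        simp only [lin2_X0, lin2_X1, elemV_X0, elemV_X1, map_add, map_mul, aeq_C,
          ← Polynomial.aeval_algHom_apply, hA, hB, polyaeval_linear, Polynomial.aeval_C, Polynomial.aeval_X, MvPolynomial.algebraMap_eq, C_0, C_1, map_zero, map_one, zero_mul, mul_zero, one_mul, mul_one, add_zero, zero_add]
        have k1 : (C l * C α : MvPolynomial (Fin 2) K) = C (l*α/γ) * C γ := by
          rw [← map_mul, ← map_mul]
          exact congrArg C (div_mul_cancel₀ (l*α) hγ).symm
        linear_combination (X 0 : MvPolynomial (Fin 2) K) * k1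
      · simp only [AlgEquiv.mul_apply]
        rw [hX1]
        simp only [lin2_X0, lin2_X1, elemV_X0, elemV_X1, map_add, map_mul, aeq_C,
          ← Polynomial.aeval_algHom_apply, hA, hB, polyaeval_linear, Polynomial.aeval_C, Polynomial.aeval_X, MvPolynomial.algebraMap_eq, C_0, C_1, map_zero, map_one, zero_mul, mul_zero, one_mul, mul_one, add_zero, zero_add]
        try ring
    · have ht : (l*β/δ)*δ = l*β := div_mul_cancel₀ _ hδ
      have hlamδ : (l*α - l*β/δ*γ)*δ = l*(α*δ-β*γ) := by linear_combination (-γ) * ht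
      have hlam : l*α - l*β/δ*γ ≠ 0 := by
        intro h0
        have h2 : l*(α*δ-β*γ) = 0 := by rw [← hlamδ, h0, zero_mul]
        exact hdet ((mul_eq_zero.mp h2).resolve_left hl)
      refine ⟨lin2 1 (l*β/δ) 0 1 (by norm_num),
        elemU 1 one_ne_zero F,
        lin2 (l*α - l*β/δ*γ) 0 γ δ (by simpa using mul_ne_zero hlam hδ),
        ⟨by rw [lin2_X0]; exact isHomogeneous_lin _ _,
         by rw [lin2_X1]; exact isHomogeneous_lin _ _⟩,
        isModGraded_of _
          (by
            rw [lin2_X0]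
            refine isModHom_lin (fun _ => rfl) (fun h0 => ?_)
            refine (hab_of_β (fun hb0 => h0 ?_)).symm
            rw [hb0, mul_zero, zero_div])
          (by rw [lin2_X1]; exact isModHom_lin (fun h => absurd rfl h) (fun _ => rfl)),
        Or.inr ⟨1, one_ne_zero, F, elemU_X1 1 one_ne_zero F, elemU_X0 1 one_ne_zero F⟩,
        isModGraded_of _
          (by
            rw [elemU_X0]
            exact IsModHom.add' (((isModHom_C 1).mul' isModHom_X0).of_eq (zero_add _)) hF)
          (by rw [elemU_X1]; exact isModHom_X1),
        ⟨by rw [lin2_X0]; exact isHomogeneous_lin _ _,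
         by rw [lin2_X1]; exact isHomogeneous_lin _ _⟩,
        isModGraded_of _
          (by rw [lin2_X0]; exact isModHom_lin (fun _ => rfl) (fun h => absurd rfl h))
          (by rw [lin2_X1]; exact isModHom_lin (fun h0 => hab_of_γ h0) (fun _ => rfl)),
        ?_, ⟨l*α - l*β/δ*γ, hlam, by rw [lin2_X0, C_0, zero_mul, add_zero]⟩⟩
      apply equiv_ext
      · simp only [AlgEquiv.mul_apply]
        rw [hX0]
        simp only [lin2_X0, lin2_X1, elemU_X0, elemU_X1, map_add, map_mul, aeq_C,
          ← Polynomial.aeval_algHom_apply, hA, hB, C_0, C_1, map_zero, map_one, zero_mul, mul_zero, one_mul, mul_one, add_zero, zero_add]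
        have k1 : (C l * C α : MvPolynomial (Fin 2) K)
            = C (l*α - l*β/δ*γ) + C (l*β/δ) * C γ := by
          rw [← map_mul, ← map_mul, ← map_add]; exact congrArg C (by ring)
        have k2 : (C l * C β : MvPolynomial (Fin 2) K) = C (l*β/δ) * C δ := by
          rw [← map_mul, ← map_mul]; exact congrArg C (by field_simp)
        linear_combination (X 0 : MvPolynomial (Fin 2) K) * k1
          + (X 1 : MvPolynomial (Fin 2) K) * k2
      · simp only [AlgEquiv.mul_apply]
        rw [hX1, hB]
        simp only [lin2_X0, lin2_X1, elemU_X0, elemU_X1, map_add, map_mul, aeq_C,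
          ← Polynomial.aeval_algHom_apply, C_0, C_1, map_zero, map_one, zero_mul, mul_zero, one_mul, mul_one, add_zero, zero_add]
        try ring
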